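/- Let n ∈ ℕ, λ > 0, L ≥ 0, M_F > 0, M_ℓ > 0, M_V > 0, T̄ > 0, C_T > 0, C_V > 0 and γ ∈ (0,1]. Then there exists C > 0, depending only on these constants, with the following property. Let U and V be measurable spaces, u : [0,∞) → U and v : [0,∞) → V Lebesgue-measurable controls, ℓ : ℝ^{n+1} × U × V → ℝ with |ℓ| ≤ M_ℓ and |ℓ(w,a,b) − ℓ(w',a,b)| ≤ L‖w − w'‖ for all w, w', a, b, and V̂ : ℝ^{n+1} → ℝ with |V̂| ≤ M_V and |V̂(w) − V̂(w')| ≤ C_V‖w − w'‖^γ for all w, w'. Let z, z' ∈ ℝ^{n+1} and let Z, Z' : [0,∞) → ℝ^{n+1} be trajectories with Z_0 = z and Z'_0 = z' such that t ↦ ℓ(Z_t,u(t),v(t)) and t ↦ ℓ(Z'_t,u(t),v(t)) are Lebesgue measurable, ‖Z_t − Z'_t‖ ≤ e^{Lt}‖z − z'‖ for all t ≥ 0, and ‖Z_t − Z_s‖ ≤ M_F|t − s| and ‖Z'_t − Z'_s‖ ≤ M_F|t − s| for all s, t ≥ 0. Let T, T' ∈ [0, T̄] with |T − T'| ≤ C_T‖z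 − z'‖. Then |(∫₀^T e^{−λt} ℓ(Z_t,u(t),v(t)) dt + e^{−λT} V̂(Z_T)) − (∫₀^{T'} e^{−λt} ℓ(Z'_t,u(t),v(t)) dt + e^{−λT'} V̂(Z'_{T'}))| ≤ C(‖z − z'‖ + ‖z − z'‖^γ). -/

import Mathlib

open MeasureTheory Set

set_option maxHeartbeats 4000000

noncomputable section

abbrev Euc (n : ℕ) : Type := EuclideanSpace ℝ (Fin (n + 1))

private lemma exp_neg_lip (a b : ℝ) (ha : 0 ≤ a) (hb : 0 ≤ b) :
    |Real.exp (-a) - Real.exp (-b)| ≤ |a - b| := by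
  wlog h : a ≤ b generalizing a b
  · rw [abs_sub_comm, abs_sub_comm a b]; exact this b a hb ha (le_of_not_ge h)
  rw [abs_of_nonneg (sub_nonneg.2 (Real.exp_le_exp.2 (by linarith))),
    abs_of_nonpos (by linarith)]
  have h1 : Real.exp (-b) = Real.exp (-a) * Real.exp (a - b) := by
    rw [← Real.exp_add]; ring_nf
  have h2 : 1 - Real.exp (a - b) ≤ b - a := by
    nlinarith [Real.add_one_le_exp (a - b)]
  have h3 : Real.exp (-a) ≤ 1 := Real.exp_le_one_iff.2 (by linarith)
  nlinarith [Real.exp_pos (-a), Real.exp_pos (a-b)]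

/-- Uniform (Hölder-type) continuity in the initial state of the auxiliary cost
consisting of a running cost up to a stopping time and a terminal value. -/
theorem auxiliary_cost_uniform_continuity
    (n : ℕ) (lam L MF Ml MV Tbar CT CV γ : ℝ)
    (hlam : 0 < lam) (hL : 0 ≤ L) (hMF : 0 < MF) (hMl : 0 < Ml) (hMV : 0 < MV)
    (hTbar : 0 < Tbar) (hCT : 0 < CT) (hCV : 0 < CV) (hγ0 : 0 < γ) (hγ1 : γ ≤ 1) :
    ∃ C : ℝ, 0 < C ∧
      ∀ (U V : Type) [MeasurableSpace U] [MeasurableSpace V]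
        (u : ℝ → U) (v : ℝ → V), Measurable u → Measurable v →
        ∀ l : Euc n → U → V → ℝ,
          (∀ w a b, |l w a b| ≤ Ml) →
          (∀ w w' a b, |l w a b - l w' a b| ≤ L * ‖w - w'‖) →
        ∀ Vh : Euc n → ℝ,
          (∀ w, |Vh w| ≤ MV) →
          (∀ w w', |Vh w - Vh w'| ≤ CV * ‖w - w'‖ ^ γ) →
        ∀ (z z' : Euc n) (Z Z' : ℝ → Euc n), Z 0 = z → Z' 0 = z' →
          Measurable (fun t => l (Z t) (u t) (v t)) →
          Measurable (fun t => l (Z' t) (u t) (v t)) →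
          (∀ t : ℝ, 0 ≤ t → ‖Z t - Z' t‖ ≤ Real.exp (L * t) * ‖z - z'‖) →
          (∀ s t : ℝ, 0 ≤ s → 0 ≤ t → ‖Z t - Z s‖ ≤ MF * |t - s|) →
          (∀ s t : ℝ, 0 ≤ s → 0 ≤ t → ‖Z' t - Z' s‖ ≤ MF * |t - s|) →
        ∀ T T' : ℝ, T ∈ Icc (0 : ℝ) Tbar → T' ∈ Icc (0 : ℝ) Tbar →
          |T - T'| ≤ CT * ‖z - z'‖ →
          |((∫ t in (0 : ℝ)..T, Real.exp (-lam * t) * l (Z t) (u t) (v t)) +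
                Real.exp (-lam * T) * Vh (Z T)) -
              ((∫ t in (0 : ℝ)..T', Real.exp (-lam * t) * l (Z' t) (u t) (v t)) +
                Real.exp (-lam * T') * Vh (Z' T'))| ≤
            C * (‖z - z'‖ + ‖z - z'‖ ^ γ) := by
  set K : ℝ := Real.exp (L * Tbar) + MF * CT with hK
  have hKpos : 0 < K := by positivity
  set A : ℝ := Tbar * L * Real.exp (L * Tbar) + Ml * CT + lam * MV * CT with hA
  set B : ℝ := CV * K ^ γ with hB
  have hApos : 0 ≤ A := by positivity
  have hBpos : 0 < B := by positivity
  refine ⟨A + B + 1, by positivity, ?_⟩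
  intro U V _ _ u v hu hv l hlb hlL Vh hVb hVH z z' Z Z' hZ0 hZ'0 hmZ hmZ' hflow hZlip hZ'lip
    T T' hT hT' hTT
  set δ : ℝ := ‖z - z'‖ with hδ
  have hδ0 : 0 ≤ δ := norm_nonneg _
  set f : ℝ → ℝ := fun t => Real.exp (-lam * t) * l (Z t) (u t) (v t) with hf
  set g : ℝ → ℝ := fun t => Real.exp (-lam * t) * l (Z' t) (u t) (v t) with hg
  -- integrability
  have hInt : ∀ (h : ℝ → ℝ), Measurable h → (∀ t, |h t| ≤ Ml) →
      ∀ a b : ℝ, 0 ≤ a → 0 ≤ b →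
      IntervalIntegrable (fun t => Real.exp (-lam * t) * h t) volume a b := by
    intro h hm hb a b ha hb'
    rw [intervalIntegrable_iff]
    apply Integrable.mono' ((integrableOn_const_iff (C := Ml)).2 (Or.inr measure_Ioc_lt_top))
    · exact (((Real.measurable_exp.comp (measurable_const.mul measurable_id)).mul
        hm)).aestronglyMeasurable
    · filter_upwards [ae_restrict_mem measurableSet_uIoc] with t ht
      rcases ht with ⟨ht1, ht2⟩
      have ht0 : 0 < t := lt_of_le_of_lt (le_min ha hb') ht1
      have he : Real.exp (-lam * t) ≤ 1 :=
        Real.exp_le_one_iff.2 (by nlinarith)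
      have := hb t
      rw [Real.norm_eq_abs, abs_mul, abs_of_pos (Real.exp_pos _)]
      nlinarith [abs_nonneg (h t), Real.exp_pos (-lam * t)]
  have hfi1 : IntervalIntegrable f volume 0 T' := hInt _ hmZ (fun t => hlb (Z t) (u t) (v t)) _ _ le_rfl hT'.1
  have hfi2 : IntervalIntegrable f volume T' T := hInt _ hmZ (fun t => hlb (Z t) (u t) (v t)) _ _ hT'.1 hT.1
  have hgi1 : IntervalIntegrable g volume 0 T' := hInt _ hmZ' (fun t => hlb (Z' t) (u t) (v t)) _ _ le_rfl hT'.1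
  -- split
  have hsplit : (∫ t in (0:ℝ)..T, f t) = (∫ t in (0:ℝ)..T', f t) + ∫ t in T'..T, f t :=
    (intervalIntegral.integral_add_adjacent_intervals hfi1 hfi2).symm
  -- term 1 : running cost on common interval
  have hterm1 : |(∫ t in (0:ℝ)..T', f t) - ∫ t in (0:ℝ)..T', g t| ≤
      Tbar * L * Real.exp (L * Tbar) * δ := by
    rw [← intervalIntegral.integral_sub hfi1 hgi1]
    have hb : ∀ t ∈ Set.uIoc (0:ℝ) T', ‖f t - g t‖ ≤ L * Real.exp (L * Tbar) * δ := by
      intro t ht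
      rw [Set.uIoc_of_le hT'.1] at ht
      have ht0 : 0 < t := ht.1
      have htT : t ≤ Tbar := le_trans ht.2 hT'.2
      have he : Real.exp (-lam * t) ≤ 1 := Real.exp_le_one_iff.2 (by nlinarith)
      have h1 : |l (Z t) (u t) (v t) - l (Z' t) (u t) (v t)| ≤ L * ‖Z t - Z' t‖ :=
        hlL _ _ _ _
      have h2 : ‖Z t - Z' t‖ ≤ Real.exp (L * t) * δ := hflow t ht0.le
      have h3 : Real.exp (L * t) ≤ Real.exp (L * Tbar) :=
        Real.exp_le_exp.2 (by nlinarith)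
      have : f t - g t = Real.exp (-lam * t) *
          (l (Z t) (u t) (v t) - l (Z' t) (u t) (v t)) := by
        simp only [hf, hg]; ring
      rw [this, Real.norm_eq_abs, abs_mul, abs_of_pos (Real.exp_pos _)]
      have h4 : L * ‖Z t - Z' t‖ ≤ L * (Real.exp (L * Tbar) * δ) := by
        apply mul_le_mul_of_nonneg_left _ hL
        exact h2.trans (by nlinarith)
      nlinarith [Real.exp_pos (-lam * t),
        abs_nonneg (l (Z t) (u t) (v t) - l (Z' t) (u t) (v t))]
    have := intervalIntegral.norm_integral_le_of_norm_le_const hb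
    rw [Real.norm_eq_abs] at this
    have hT'b : |T' - 0| ≤ Tbar := by
      rw [sub_zero, abs_of_nonneg hT'.1]; exact hT'.2
    calc |∫ t in (0:ℝ)..T', f t - g t| ≤ L * Real.exp (L * Tbar) * δ * |T' - 0| := this
      _ ≤ Tbar * L * Real.exp (L * Tbar) * δ := by
          nlinarith [mul_le_mul_of_nonneg_left hT'b
            (show (0:ℝ) ≤ L * Real.exp (L * Tbar) * δ by positivity)]
  -- term 2 : running cost on the small interval
  have hterm2 : |∫ t in T'..T, f t| ≤ Ml * (CT * δ) := by
    have hb : ∀ t ∈ Set.uIoc T' T, ‖f t‖ ≤ Ml := by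
      intro t ht
      rcases ht with ⟨ht1, ht2⟩
      have ht0 : 0 < t := lt_of_le_of_lt (le_min hT'.1 hT.1) ht1
      have he : Real.exp (-lam * t) ≤ 1 := Real.exp_le_one_iff.2 (by nlinarith)
      rw [Real.norm_eq_abs, hf, abs_mul, abs_of_pos (Real.exp_pos _)]
      nlinarith [hlb (Z t) (u t) (v t), abs_nonneg (l (Z t) (u t) (v t)),
        Real.exp_pos (-lam * t)]
    have := intervalIntegral.norm_integral_le_of_norm_le_const hb
    rw [Real.norm_eq_abs] at this
    calc |∫ t in T'..T, f t| ≤ Ml * |T - T'| := this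
      _ ≤ Ml * (CT * δ) := by nlinarith
  -- term 3 : terminal values
  have hZTT' : ‖Z T - Z' T'‖ ≤ K * δ := by
    calc ‖Z T - Z' T'‖ ≤ ‖Z T - Z' T‖ + ‖Z' T - Z' T'‖ := by
          have := norm_sub_le_norm_sub_add_norm_sub (Z T) (Z' T) (Z' T')
          linarith [norm_sub_le (Z T - Z' T) (Z' T' - Z' T)]
      _ ≤ Real.exp (L * Tbar) * δ + MF * (CT * δ) := by
          have h1 := hflow T hT.1
          have h2 := hZ'lip T' T hT'.1 hT.1
          have h3 : Real.exp (L * T) ≤ Real.exp (L * Tbar) :=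
            Real.exp_le_exp.2 (by nlinarith [hT.2])
          have h4 : MF * |T - T'| ≤ MF * (CT * δ) := by nlinarith
          have : ‖Z T - Z' T‖ ≤ Real.exp (L * Tbar) * δ := h1.trans (by nlinarith)
          linarith [h2.trans h4]
      _ = K * δ := by rw [hK]; ring
  have hterm3 : |Real.exp (-lam * T) * Vh (Z T) - Real.exp (-lam * T') * Vh (Z' T')| ≤
      lam * MV * CT * δ + B * δ ^ γ := by
    have hdecomp : Real.exp (-lam * T) * Vh (Z T) - Real.exp (-lam * T') * Vh (Z' T') =
        (Real.exp (-lam * T) - Real.exp (-lam * T')) * Vh (Z T) +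
          Real.exp (-lam * T') * (Vh (Z T) - Vh (Z' T')) := by ring
    have he1 : |Real.exp (-lam * T) - Real.exp (-lam * T')| ≤ lam * (CT * δ) := by
      have h1 : |Real.exp (-(lam * T)) - Real.exp (-(lam * T'))| ≤ |lam * T - lam * T'| :=
        exp_neg_lip _ _ (by nlinarith [hT.1]) (by nlinarith [hT'.1])
      have h2 : |lam * T - lam * T'| = lam * |T - T'| := by
        rw [← mul_sub, abs_mul, abs_of_pos hlam]
      have h3 : lam * |T - T'| ≤ lam * (CT * δ) := by nlinarith
      simp only [neg_mul] at *
      linarith [h1.trans (h2 ▸ h3)]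
    have he2 : Real.exp (-lam * T') ≤ 1 :=
      Real.exp_le_one_iff.2 (by nlinarith [hT'.1])
    have hV1 : |Vh (Z T)| ≤ MV := hVb _
    have hV2 : |Vh (Z T) - Vh (Z' T')| ≤ B * δ ^ γ := by
      have h1 := hVH (Z T) (Z' T')
      have h2 : ‖Z T - Z' T'‖ ^ γ ≤ (K * δ) ^ γ :=
        Real.rpow_le_rpow (norm_nonneg _) hZTT' hγ0.le
      have h3 : (K * δ) ^ γ = K ^ γ * δ ^ γ := Real.mul_rpow hKpos.le hδ0
      calc |Vh (Z T) - Vh (Z' T')| ≤ CV * ‖Z T - Z' T'‖ ^ γ := h1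
        _ ≤ CV * (K ^ γ * δ ^ γ) := by rw [← h3]; nlinarith
        _ = B * δ ^ γ := by rw [hB]; ring
    calc |Real.exp (-lam * T) * Vh (Z T) - Real.exp (-lam * T') * Vh (Z' T')|
        ≤ |(Real.exp (-lam * T) - Real.exp (-lam * T')) * Vh (Z T)| +
          |Real.exp (-lam * T') * (Vh (Z T) - Vh (Z' T'))| := by
          rw [hdecomp]; exact abs_add_le _ _
      _ ≤ lam * (CT * δ) * MV + 1 * (B * δ ^ γ) := by
          rw [abs_mul, abs_mul]
          have hs1 : |Real.exp (-lam * T) - Real.exp (-lam * T')| * |Vh (Z T)| ≤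
              lam * (CT * δ) * MV :=
            mul_le_mul he1 hV1 (abs_nonneg _) (by positivity)
          have hs2 : |Real.exp (-lam * T')| * |Vh (Z T) - Vh (Z' T')| ≤ 1 * (B * δ ^ γ) :=
            mul_le_mul (by rw [abs_of_pos (Real.exp_pos _)]; exact he2) hV2
              (abs_nonneg _) zero_le_one
          linarith
      _ = lam * MV * CT * δ + B * δ ^ γ := by ring
  -- assemble
  have key : |((∫ t in (0:ℝ)..T, f t) + Real.exp (-lam * T) * Vh (Z T)) -
      ((∫ t in (0:ℝ)..T', g t) + Real.exp (-lam * T') * Vh (Z' T'))| ≤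
      A * δ + B * δ ^ γ := by
    rw [hsplit]
    have : ((∫ t in (0:ℝ)..T', f t) + (∫ t in T'..T, f t) + Real.exp (-lam * T) * Vh (Z T)) -
        ((∫ t in (0:ℝ)..T', g t) + Real.exp (-lam * T') * Vh (Z' T')) =
        ((∫ t in (0:ℝ)..T', f t) - ∫ t in (0:ℝ)..T', g t) + (∫ t in T'..T, f t) +
          (Real.exp (-lam * T) * Vh (Z T) - Real.exp (-lam * T') * Vh (Z' T')) := by ring
    rw [this]
    refine le_trans (abs_add_le _ _) ?_
    have h4 := abs_add_le ((∫ t in (0:ℝ)..T', f t) - ∫ t in (0:ℝ)..T', g t) (∫ t in T'..T, f t)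
    have h5 := add_le_add (add_le_add hterm1 hterm2) hterm3
    rw [hA]
    linarith
  have hδγ : 0 ≤ δ ^ γ := Real.rpow_nonneg hδ0 _
  calc |((∫ t in (0:ℝ)..T, f t) + Real.exp (-lam * T) * Vh (Z T)) -
      ((∫ t in (0:ℝ)..T', g t) + Real.exp (-lam * T') * Vh (Z' T'))|
      ≤ A * δ + B * δ ^ γ := key
    _ ≤ (A + B + 1) * (δ + δ ^ γ) := by nlinarith
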